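/- Let R be a ring and let e(x) = \sum_{i=0}^\infty e_i x^i be an idempotent of the formal power series ring R[[x]]. Then every coefficient e_i lies in the two-sided ideal R e_0 R generated by the constant coefficient e_0. -/

import Mathlib

/-- If `e(x) = ∑ eᵢxⁱ` is an idempotent of the formal power series ring `R[[x]]`,
then every coefficient `eᵢ` lies in the two-sided ideal `R e₀ R` generated by the
constant coefficient `e₀`. -/
theorem coeff_mem_span_constantCoeff_of_idempotent_powerSeries
    {R : Type*} [Ring R] (e : PowerSeries R) (he : e * e = e) :
    ∀ i : ℕ, PowerSeries.coeff i e ∈ TwoSidedIdeal.span {PowerSeries.coeff 0 e} := by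
  have h0 : PowerSeries.coeff 0 e ∈ TwoSidedIdeal.span {PowerSeries.coeff 0 e} :=
    TwoSidedIdeal.subset_span rfl
  intro i
  induction i using Nat.strong_induction_on with
  | _ i ih =>
    have h := congrArg (PowerSeries.coeff i) he
    rw [PowerSeries.coeff_mul] at h
    rw [← h]
    refine sum_mem fun p hp => ?_
    rw [Finset.HasAntidiagonal.mem_antidiagonal] at hp
    rcases Nat.eq_zero_or_pos p.1 with h1 | h1
    · rw [h1]
      exact (TwoSidedIdeal.span _).mul_mem_right _ _ h0
    · rcases Nat.lt_or_ge p.1 i with h2 | h2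
      · exact (TwoSidedIdeal.span _).mul_mem_right _ _ (ih p.1 h2)
      · have : p.1 = i := le_antisymm (hp ▸ Nat.le_add_right _ _) h2
        have h3 : p.2 = 0 := by omega
        rw [h3]
        exact (TwoSidedIdeal.span _).mul_mem_left _ _ h0
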